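/- Let Σ be a triangulation of a polyhedron P ⊆ ℝⁿ, let Q ⊆ P be a polyhedron, and suppose Σ_Q := {σ ∈ Σ : σ ⊆ Q} triangulates Q. Put C := cl(P \ Q) and Σ* := {σ ∈ Σ : there exists τ ∈ Σ with τ ⊄ Q and σ a face of τ}. Then {σ ∈ Σ : σ ⊆ C} = Σ*. -/

import Mathlib

open Set

/-- A polytope in ℝⁿ: the convex hull of a finite set of points. -/
def IsPolytope {n : ℕ} (s : Set (Fin n → ℝ)) : Prop :=
  ∃ V : Finset (Fin n → ℝ), s = convexHull ℝ (V : Set (Fin n → ℝ))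

/-- A polyhedron in ℝⁿ: a finite union of polytopes. -/
def IsPolyhedron {n : ℕ} (P : Set (Fin n → ℝ)) : Prop :=
  ∃ S : Set (Set (Fin n → ℝ)), S.Finite ∧ (∀ s ∈ S, IsPolytope s) ∧ P = ⋃₀ S

/-- A simplex in ℝⁿ: the convex hull of a nonempty finite affinely independent set. -/
def IsSimplex {n : ℕ} (s : Set (Fin n → ℝ)) : Prop :=
  ∃ V : Finset (Fin n → ℝ), V.Nonempty ∧
    AffineIndependent ℝ (fun x : {x : Fin n → ℝ // x ∈ V} => x.val) ∧
    s = convexHull ℝ (V : Set (Fin n → ℝ))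

/-- `IsFaceOf s t`: `t` is a simplex with vertex set `W` and `s` is the convex hull
of a nonempty subset of `W`. -/
def IsFaceOf {n : ℕ} (s t : Set (Fin n → ℝ)) : Prop :=
  ∃ W V : Finset (Fin n → ℝ), W.Nonempty ∧
    AffineIndependent ℝ (fun x : {x : Fin n → ℝ // x ∈ W} => x.val) ∧
    t = convexHull ℝ (W : Set (Fin n → ℝ)) ∧
    V.Nonempty ∧ V ⊆ W ∧ s = convexHull ℝ (V : Set (Fin n → ℝ))

/-- A triangulation in ℝⁿ: a finite set of simplices closed under taking faces, such that
any two members intersect in a common face (or not at all). -/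
structure IsTriangulation {n : ℕ} (K : Set (Set (Fin n → ℝ))) : Prop where
  finite : K.Finite
  simplex : ∀ s ∈ K, IsSimplex s
  face_mem : ∀ s ∈ K, ∀ t, IsFaceOf t s → t ∈ K
  inter : ∀ s ∈ K, ∀ t ∈ K, s ∩ t = ∅ ∨ (IsFaceOf (s ∩ t) s ∧ IsFaceOf (s ∩ t) t)

/-- A set of simplices closed under taking faces. -/
def FaceClosed {n : ℕ} (D : Set (Set (Fin n → ℝ))) : Prop :=
  ∀ s ∈ D, ∀ t, IsFaceOf t s → t ∈ D

/-- A `K`-definable polyhedron: the union of a face-closed subset of `K`. -/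
def SigmaDefinable {n : ℕ} (K : Set (Set (Fin n → ℝ))) (C : Set (Fin n → ℝ)) : Prop :=
  ∃ D ⊆ K, FaceClosed D ∧ C = ⋃₀ D

/-- A `K`-definable open set: the complement in `|K| = ⋃₀ K` of a `K`-definable polyhedron. -/
def SigmaDefOpen {n : ℕ} (K : Set (Set (Fin n → ℝ))) (O : Set (Fin n → ℝ)) : Prop :=
  ∃ C, SigmaDefinable K C ∧ O = ⋃₀ K \ C

/-- The open star of a simplex `s` in a triangulation `K`. -/
def openStar {n : ℕ} (K : Set (Set (Fin n → ℝ))) (s : Set (Fin n → ℝ)) : Set (Fin n → ℝ) :=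
  ⋃ t ∈ {t ∈ K | s ⊆ t}, intrinsicInterior ℝ t

/-- The interior of `S` in the subspace topology of `P`, viewed as a subset of ℝⁿ. -/
def intSub {n : ℕ} (P S : Set (Fin n → ℝ)) : Set (Fin n → ℝ) :=
  Subtype.val '' interior (Subtype.val ⁻¹' S : Set P)

/-- An open subpolyhedron of a polyhedron `P`: a subset of `P` whose complement in `P`
is a polyhedron. -/
def IsOpenSubpoly {n : ℕ} (P O : Set (Fin n → ℝ)) : Prop :=
  O ⊆ P ∧ IsPolyhedron (P \ O)

/-- `s` is a simplex with exactly `k` (affinely independent) vertices. -/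
def SimplexWithCard {n : ℕ} (s : Set (Fin n → ℝ)) (k : ℕ) : Prop :=
  ∃ V : Finset (Fin n → ℝ), V.Nonempty ∧
    AffineIndependent ℝ (fun x : {x : Fin n → ℝ // x ∈ V} => x.val) ∧
    s = convexHull ℝ (V : Set (Fin n → ℝ)) ∧ V.card = k

/-- `P` contains a simplex with `d+1` affinely independent vertices, and no simplex with more;
i.e. the polyhedron `P` has dimension exactly `d`. -/
def PolyDimEq {n : ℕ} (P : Set (Fin n → ℝ)) (d : ℕ) : Prop :=
  (∃ V : Finset (Fin n → ℝ), V.Nonempty ∧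
      AffineIndependent ℝ (fun x : {x : Fin n → ℝ // x ∈ V} => x.val) ∧
      convexHull ℝ (V : Set (Fin n → ℝ)) ⊆ P ∧ V.card = d + 1) ∧
  (∀ V : Finset (Fin n → ℝ),
      AffineIndependent ℝ (fun x : {x : Fin n → ℝ // x ∈ V} => x.val) →
      convexHull ℝ (V : Set (Fin n → ℝ)) ⊆ P → V.card ≤ d + 1)

/-- The polyhedron `P` has dimension at most `d`. -/
def PolyDimLE {n : ℕ} (P : Set (Fin n → ℝ)) (d : ℕ) : Prop :=
  ∀ V : Finset (Fin n → ℝ),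
    AffineIndependent ℝ (fun x : {x : Fin n → ℝ // x ∈ V} => x.val) →
    convexHull ℝ (V : Set (Fin n → ℝ)) ⊆ P → V.card ≤ d + 1

/-- The triangulation `K` has combinatorial dimension exactly `d`. -/
def TriangDimEq {n : ℕ} (K : Set (Set (Fin n → ℝ))) (d : ℕ) : Prop :=
  (∃ s ∈ K, SimplexWithCard s (d + 1)) ∧
  (∀ s ∈ K, ∀ k, SimplexWithCard s k → k ≤ d + 1)

/-- The bounded-depth terms: `bdTerm P k V = V k ∪ (V k ⇨ bdTerm P (k-1) V)`,
where `U ⇨ W = int_P ((P \ U) ∪ W)` is the Heyting implication of open subsets of `P`. -/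
def bdTerm {n : ℕ} (P : Set (Fin n → ℝ)) :
    (k : ℕ) → (Fin (k + 1) → Set (Fin n → ℝ)) → Set (Fin n → ℝ)
  | 0, V => V 0 ∪ intSub P (P \ V 0)
  | k + 1, V => V (Fin.last (k + 1)) ∪
      intSub P ((P \ V (Fin.last (k + 1))) ∪ bdTerm P k (fun i => V i.castSucc))

/-- The finite poset `A` has depth exactly `d`: it has a chain of cardinality `d+1`
and no longer chain. -/
def depthEq (A : Type) [PartialOrder A] (d : ℕ) : Prop :=
  (∃ C : Finset A, IsChain (· ≤ ·) (C : Set A) ∧ C.card = d + 1) ∧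
  (∀ C : Finset A, IsChain (· ≤ ·) (C : Set A) → C.card ≤ d + 1)

/-- An upper set of the poset `(K, ⊆)`. -/
def UpperSetOf {n : ℕ} (K U : Set (Set (Fin n → ℝ))) : Prop :=
  U ⊆ K ∧ ∀ s ∈ U, ∀ t ∈ K, s ⊆ t → t ∈ U

/-- The map sending an upper set of a triangulation to the union of the relative
interiors of its members. -/
def gammaUp {n : ℕ} (U : Set (Set (Fin n → ℝ))) : Set (Fin n → ℝ) :=
  ⋃ s ∈ U, intrinsicInterior ℝ s


section Aux

variable {n : ℕ}

lemma bary_unique {W : Finset (Fin n → ℝ)}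
    (hW : AffineIndependent ℝ (fun x : {x : Fin n → ℝ // x ∈ W} => x.val))
    {w₁ w₂ : (Fin n → ℝ) → ℝ}
    (h₁ : ∑ y ∈ W, w₁ y = 1) (h₂ : ∑ y ∈ W, w₂ y = 1)
    (he : ∑ y ∈ W, w₁ y • y = ∑ y ∈ W, w₂ y • y) :
    ∀ y ∈ W, w₁ y = w₂ y := by
  rw [affineIndependent_iff] at hW
  have key := hW Finset.univ (fun i => w₁ i.val - w₂ i.val) ?_ ?_
  · intro y hy
    have := key ⟨y, hy⟩ (Finset.mem_univ _)
    linarith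
  · rw [Finset.univ_eq_attach, Finset.sum_attach W (fun y => w₁ y - w₂ y),
      Finset.sum_sub_distrib, h₁, h₂, sub_self]
  · rw [Finset.univ_eq_attach]
    have : ∑ i ∈ W.attach, (w₁ i.val - w₂ i.val) • i.val
        = ∑ y ∈ W, (w₁ y - w₂ y) • y := Finset.sum_attach W (fun y => (w₁ y - w₂ y) • y)
    rw [this]
    simp only [sub_smul, Finset.sum_sub_distrib, he, sub_self]

lemma vertex_subset {W W' : Finset (Fin n → ℝ)}
    (hW : AffineIndependent ℝ (fun x : {x : Fin n → ℝ // x ∈ W} => x.val))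
    (h1 : (W' : Set (Fin n → ℝ)) ⊆ convexHull ℝ (W : Set (Fin n → ℝ)))
    {w : Fin n → ℝ} (hw : w ∈ W)
    (hw' : w ∈ convexHull ℝ (W' : Set (Fin n → ℝ))) : w ∈ W' := by
  classical
  obtain ⟨a, ha0, ha1, hax⟩ := Finset.mem_convexHull'.1 hw'
  have hB : ∀ y : {y : Fin n → ℝ // y ∈ W'}, ∃ b : (Fin n → ℝ) → ℝ,
      (∀ u ∈ W, 0 ≤ b u) ∧ ∑ u ∈ W, b u = 1 ∧ ∑ u ∈ W, b u • u = y.val :=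
    fun y => Finset.mem_convexHull'.1 (h1 y.2)
  choose b hb0 hb1 hb2 using hB
  -- combined coefficients
  set c : (Fin n → ℝ) → ℝ := fun u => ∑ y ∈ W'.attach, a y.val * b y u with hc
  have hc1 : ∑ u ∈ W, c u = 1 := by
    rw [Finset.sum_comm]
    have : ∀ y ∈ W'.attach, ∑ u ∈ W, a y.val * b y u = a y.val := by
      intro y _
      rw [← Finset.mul_sum, hb1 y, mul_one]
    rw [Finset.sum_congr rfl this, Finset.sum_attach W' a, ha1]
  have hcx : ∑ u ∈ W, c u • u = w := by
    have : ∀ u ∈ W, c u • u = ∑ y ∈ W'.attach, (a y.val * b y u) • u := by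
      intro u _; rw [hc]; exact Finset.sum_smul
    rw [Finset.sum_congr rfl this, Finset.sum_comm]
    have : ∀ y ∈ W'.attach, ∑ u ∈ W, (a y.val * b y u) • u = a y.val • y.val := by
      intro y _
      simp_rw [mul_smul, ← Finset.smul_sum, hb2 y]
    rw [Finset.sum_congr rfl this, Finset.sum_attach W' (fun y => a y • y), hax]
  -- indicator coefficients
  set d : (Fin n → ℝ) → ℝ := fun u => if u = w then 1 else 0 with hd
  have hd1 : ∑ u ∈ W, d u = 1 := by
    rw [hd]; simp [Finset.sum_ite_eq' W w (fun _ => (1:ℝ)), hw]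
  have hdx : ∑ u ∈ W, d u • u = w := by
    rw [hd]
    have : ∀ u ∈ W, (if u = w then (1:ℝ) else 0) • u = if u = w then w else 0 := by
      intro u _; split_ifs with h <;> simp [h]
    rw [Finset.sum_congr rfl this, Finset.sum_ite_eq' W w (fun _ => w)]
    simp [hw]
  have hcw : c w = 1 := by
    have := bary_unique hW hc1 hd1 (by rw [hcx, hdx]) w hw
    simpa [hd] using this
  -- now extract a vertex equal to w
  have hble : ∀ y ∈ W'.attach, b y w ≤ 1 := by
    intro y _
    calc b y w ≤ ∑ u ∈ W, b y u := Finset.single_le_sum (fun u hu => hb0 y u hu) hw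
    _ = 1 := hb1 y
  have hzero : ∑ y ∈ W'.attach, a y.val * (1 - b y w) = 0 := by
    have : ∑ y ∈ W'.attach, a y.val * (1 - b y w)
        = ∑ y ∈ W'.attach, a y.val - ∑ y ∈ W'.attach, a y.val * b y w := by
      simp [mul_sub, Finset.sum_sub_distrib]
    rw [this, Finset.sum_attach W' a, ha1]
    have h2 : ∑ y ∈ W'.attach, a y.val * b y w = c w := rfl
    rw [h2, hcw, sub_self]
  have hterm : ∀ y ∈ W'.attach, a y.val * (1 - b y w) = 0 := by
    have hnn : ∀ y ∈ W'.attach, 0 ≤ a y.val * (1 - b y w) := fun y hy =>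
      mul_nonneg (ha0 y.val y.2) (by linarith [hble y hy])
    exact (Finset.sum_eq_zero_iff_of_nonneg hnn).1 hzero
  have hy0 : ∃ y ∈ W'.attach, a y.val ≠ 0 := by
    by_contra h
    push_neg at h
    have : ∑ y ∈ W'.attach, a y.val = 0 := Finset.sum_eq_zero fun y hy => h y hy
    rw [Finset.sum_attach W' a, ha1] at this
    norm_num at this
  obtain ⟨y₀, hy₀mem, hy₀⟩ := hy0
  have hbw : b y₀ w = 1 := by
    have := hterm y₀ hy₀mem
    rcases mul_eq_zero.1 this with h | h
    · exact absurd h hy₀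
    · linarith
  -- show y₀ = w
  have herase : ∑ u ∈ W.erase w, b y₀ u = 0 := by
    have := Finset.add_sum_erase W (b y₀) hw
    rw [hb1 y₀, hbw] at this
    linarith
  have herase0 : ∀ u ∈ W.erase w, b y₀ u = 0 :=
    (Finset.sum_eq_zero_iff_of_nonneg fun u hu => hb0 y₀ u (Finset.mem_of_mem_erase hu)).1 herase
  have : y₀.val = w := by
    have := hb2 y₀
    rw [← Finset.add_sum_erase W (fun u => b y₀ u • u) hw] at this
    rw [hbw, one_smul, Finset.sum_eq_zero (fun u hu => by rw [herase0 u hu, zero_smul]),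
      add_zero] at this
    exact this.symm
  exact this ▸ y₀.2

lemma hull_inj {W W' : Finset (Fin n → ℝ)}
    (hW : AffineIndependent ℝ (fun x : {x : Fin n → ℝ // x ∈ W} => x.val))
    (hW' : AffineIndependent ℝ (fun x : {x : Fin n → ℝ // x ∈ W'} => x.val))
    (h : convexHull ℝ (W : Set (Fin n → ℝ)) = convexHull ℝ (W' : Set (Fin n → ℝ))) :
    W = W' := by
  apply Finset.Subset.antisymm
  · intro w hw
    exact vertex_subset hW (h ▸ subset_convexHull ℝ _) hw
      (h ▸ subset_convexHull ℝ (W : Set (Fin n → ℝ)) hw)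
  · intro w hw
    exact vertex_subset hW' (h ▸ subset_convexHull ℝ _) hw
      (h ▸ subset_convexHull ℝ (W' : Set (Fin n → ℝ)) hw)

/-- `x` is a strictly positive convex combination of the points of `W`. -/
def StrictCombo (W : Finset (Fin n → ℝ)) (x : Fin n → ℝ) : Prop :=
  ∃ p : (Fin n → ℝ) → ℝ, (∀ u ∈ W, 0 < p u) ∧ ∑ u ∈ W, p u = 1 ∧ ∑ u ∈ W, p u • u = x

lemma strictCombo_mem_hull {W : Finset (Fin n → ℝ)} {x : Fin n → ℝ}
    (h : StrictCombo W x) : x ∈ convexHull ℝ (W : Set (Fin n → ℝ)) := by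
  obtain ⟨p, hp, h1, h2⟩ := h
  exact Finset.mem_convexHull'.2 ⟨p, fun y hy => (hp y hy).le, h1, h2⟩

lemma strictCombo_centroid {W : Finset (Fin n → ℝ)} (hne : W.Nonempty) :
    StrictCombo W (∑ u ∈ W, ((W.card : ℝ))⁻¹ • u) := by
  have hpos : (0:ℝ) < (W.card : ℝ) := by
    exact_mod_cast Finset.card_pos.2 hne
  exact ⟨fun _ => ((W.card : ℝ))⁻¹, fun u _ => inv_pos.2 hpos,
    by rw [Finset.sum_const, nsmul_eq_mul, mul_inv_cancel₀ hpos.ne'], rfl⟩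

/-- A face containing a strictly interior point is the whole simplex. -/
lemma subset_of_strictCombo_mem_face {W V : Finset (Fin n → ℝ)}
    (hW : AffineIndependent ℝ (fun x : {x : Fin n → ℝ // x ∈ W} => x.val))
    (hVW : V ⊆ W) {x : Fin n → ℝ} (hx : StrictCombo W x)
    (hxV : x ∈ convexHull ℝ (V : Set (Fin n → ℝ))) : W ⊆ V := by
  classical
  obtain ⟨p, hp, hp1, hpx⟩ := hx
  obtain ⟨a, ha0, ha1, hax⟩ := Finset.mem_convexHull'.1 hxV
  set a' : (Fin n → ℝ) → ℝ := fun u => if u ∈ V then a u else 0 with ha'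
  have hWV : W ∩ V = V := Finset.inter_eq_right.2 hVW
  have h1 : ∑ u ∈ W, a' u = 1 := by
    rw [ha']; rw [Finset.sum_ite_mem, hWV, ha1]
  have h2 : ∑ u ∈ W, a' u • u = x := by
    have : ∀ u ∈ W, a' u • u = if u ∈ V then a u • u else 0 := by
      intro u _; rw [ha', ite_smul, zero_smul]
    rw [Finset.sum_congr rfl this, Finset.sum_ite_mem, hWV, hax]
  have huniq := bary_unique hW hp1 h1 (by rw [hpx, h2])
  intro u hu
  by_contra hnot
  have := huniq u hu
  rw [ha'] at this
  simp only [hnot, if_false] at this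
  exact absurd this (hp u hu).ne'

/-- Every point of a simplex is a limit of strictly interior points. -/
lemma hull_subset_closure_strictCombo {W : Finset (Fin n → ℝ)} (hne : W.Nonempty) :
    convexHull ℝ (W : Set (Fin n → ℝ)) ⊆ closure {x | StrictCombo W x} := by
  intro x hx
  obtain ⟨a, ha0, ha1, hax⟩ := Finset.mem_convexHull'.1 hx
  obtain ⟨q, hq, hq1, hqc⟩ := strictCombo_centroid hne
  set c : Fin n → ℝ := ∑ u ∈ W, ((W.card : ℝ))⁻¹ • u with hcdef
  refine mem_closure_of_tendsto
    (f := fun k : ℕ => (1 - (1 / (k+1) : ℝ)) • x + (1 / (k+1) : ℝ) • c)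
    (b := Filter.atTop) ?_ ?_
  · have hcont : Continuous fun e : ℝ => (1 - e) • x + e • c := by continuity
    have := (hcont.tendsto 0).comp tendsto_one_div_add_atTop_nhds_zero_nat
    simpa [Function.comp_def] using this
  · filter_upwards with k
    have hek : (0:ℝ) < 1 / (k+1) := by positivity
    have hek1 : (1 / (k+1) : ℝ) ≤ 1 := by
      rw [div_le_one (by positivity)]
      linarith [Nat.cast_nonneg (α := ℝ) k]
    refine ⟨fun u => (1 - 1/(k+1)) * a u + (1/(k+1)) * q u, fun u hu => ?_, ?_, ?_⟩
    · have := mul_nonneg (by linarith : (0:ℝ) ≤ 1 - 1/(k+1)) (ha0 u hu)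
      have := mul_pos hek (hq u hu)
      linarith
    · rw [Finset.sum_add_distrib, ← Finset.mul_sum, ← Finset.mul_sum, ha1, hq1]
      ring
    · simp_rw [add_smul, Finset.sum_add_distrib, mul_smul, ← Finset.smul_sum, hax, hqc]

end Aux

/-- Let `K` triangulate the polyhedron `P`, let `Q ⊆ P` be a polyhedron
triangulated by `{s ∈ K : s ⊆ Q}`, and put `C := cl (P \ Q)`.  Then the simplices of `K`
contained in `C` are exactly the faces of simplices of `K` not contained in `Q`. -/
theorem simplices_in_closure_diff {n : ℕ} (K : Set (Set (Fin n → ℝ)))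
    (hK : IsTriangulation K)
    (P Q : Set (Fin n → ℝ)) (hP : ⋃₀ K = P)
    (hQpoly : IsPolyhedron Q) (hQP : Q ⊆ P)
    (hQ : ⋃₀ {s ∈ K | s ⊆ Q} = Q) :
    {s ∈ K | s ⊆ closure (P \ Q)} = {s ∈ K | ∃ t ∈ K, ¬ t ⊆ Q ∧ IsFaceOf s t} := by
  -- key fact: a simplex of K not contained in Q is contained in `closure (P \ Q)`
  have key : ∀ t ∈ K, ¬ t ⊆ Q → t ⊆ closure (P \ Q) := by
    intro t ht htQ
    obtain ⟨W, hWne, hWind, hteq⟩ := hK.simplex t ht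
    have hsub : {x | StrictCombo W x} ⊆ P \ Q := by
      intro x hx
      have hxt : x ∈ t := hteq ▸ strictCombo_mem_hull hx
      refine ⟨hP ▸ ⟨t, ht, hxt⟩, fun hxQ => ?_⟩
      rw [← hQ] at hxQ
      obtain ⟨s, ⟨hs, hsQ⟩, hxs⟩ := hxQ
      rcases hK.inter t ht s hs with hemp | ⟨hface, -⟩
      · exact absurd hemp (Set.nonempty_iff_ne_empty.1 ⟨x, hxt, hxs⟩)
      · obtain ⟨W', V', hW'ne, hW'ind, hteq', hV'ne, hV'W', hint⟩ := hface
        have hWW' : W = W' := hull_inj hWind hW'ind (hteq ▸ hteq')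
        have hWV' : W ⊆ V' :=
          subset_of_strictCombo_mem_face hWind (hWW' ▸ hV'W') hx
            (by rw [← hint]; exact ⟨hxt, hxs⟩)
        apply htQ
        calc t = convexHull ℝ (W : Set (Fin n → ℝ)) := hteq
        _ ⊆ convexHull ℝ (V' : Set (Fin n → ℝ)) :=
          convexHull_mono (by exact_mod_cast hWV')
        _ = t ∩ s := hint.symm
        _ ⊆ Q := Set.inter_subset_right.trans hsQ
    calc t = convexHull ℝ (W : Set (Fin n → ℝ)) := hteq
    _ ⊆ closure {x | StrictCombo W x} := hull_subset_closure_strictCombo hWne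
    _ ⊆ closure (P \ Q) := closure_mono hsub
  ext s
  simp only [Set.mem_setOf_eq]
  constructor
  · rintro ⟨hs, hsC⟩
    refine ⟨hs, ?_⟩
    by_cases hsQ : s ⊆ Q
    · -- s ⊆ Q : find a simplex t ⊄ Q having s as a face
      obtain ⟨W, hWne, hWind, hseq⟩ := hK.simplex s hs
      set x : Fin n → ℝ := ∑ u ∈ W, ((W.card : ℝ))⁻¹ • u with hxdef
      have hxs : x ∈ s := hseq ▸ strictCombo_mem_hull (strictCombo_centroid hWne)
      -- closure (P \ Q) is contained in the union of simplices not contained in Q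
      have hU : closure (P \ Q) ⊆ ⋃ t ∈ {t ∈ K | ¬ t ⊆ Q}, t := by
        apply closure_minimal
        · rintro y ⟨hyP, hyQ⟩
          rw [← hP] at hyP
          obtain ⟨t, ht, hyt⟩ := hyP
          exact Set.mem_biUnion ⟨ht, fun h => hyQ (h hyt)⟩ hyt
        · apply Set.Finite.isClosed_biUnion (hK.finite.subset (Set.sep_subset _ _))
          rintro t ⟨ht, -⟩
          obtain ⟨V, -, -, hteq⟩ := hK.simplex t ht
          rw [hteq]
          exact (V.finite_toSet.isClosed_convexHull (𝕜 := ℝ))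
      obtain ⟨t, ⟨ht, htQ⟩, hxt⟩ := Set.mem_iUnion₂.1 (hU (hsC hxs))
      refine ⟨t, ht, htQ, ?_⟩
      rcases hK.inter s hs t ht with hemp | ⟨hfs, hft⟩
      · exact absurd hemp (Set.nonempty_iff_ne_empty.1 ⟨x, hxs, hxt⟩)
      · -- s ∩ t is a face of s containing the interior point x, so s ∩ t = s
        obtain ⟨W', V', hW'ne, hW'ind, hseq', hV'ne, hV'W', hinter⟩ := hfs
        have hWW' : W = W' := hull_inj hWind hW'ind (hseq ▸ hseq')
        have hWV' : W ⊆ V' := by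
          refine subset_of_strictCombo_mem_face hWind (hWW' ▸ hV'W')
            (strictCombo_centroid hWne) ?_
          rw [← hinter]; exact ⟨hxs, hxt⟩
        have hst : s ∩ t = s := by
          apply Set.Subset.antisymm Set.inter_subset_left
          calc s = convexHull ℝ (W : Set (Fin n → ℝ)) := hseq
          _ ⊆ convexHull ℝ (V' : Set (Fin n → ℝ)) :=
            convexHull_mono (by exact_mod_cast hWV')
          _ = s ∩ t := hinter.symm
        exact hst ▸ hft
    · -- s itself works
      obtain ⟨W, hWne, hWind, hseq⟩ := hK.simplex s hs
      exact ⟨s, hs, hsQ, W, W, hWne, hWind, hseq, hWne, Finset.Subset.refl W, hseq⟩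
  · rintro ⟨hs, t, ht, htQ, hface⟩
    refine ⟨hs, ?_⟩
    obtain ⟨W, V, hWne, hWind, hteq, hVne, hVW, hseq⟩ := hface
    have hst : s ⊆ t := by
      rw [hseq, hteq]; exact convexHull_mono (by exact_mod_cast hVW)
    exact hst.trans (key t ht htQ)
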